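/- Let μ be a probability distribution on a finite abelian group X and μ̄ the distribution defined by μ̄(M) = μ(−M). If the convolution ν = μ * μ̄ equals m_K for some subgroup K of X, then μ = m_K * E_x for some x ∈ X. -/

import Mathlib

/-- A probability distribution on a finite set, given by its mass function. -/
def IsDist {X : Type*} [Fintype X] (μ : X → ℝ) : Prop :=
  (∀ x, 0 ≤ μ x) ∧ ∑ x, μ x = 1

/-- The characteristic function `μ̂(y) = ∑_x (x,y) μ({x})` of a distribution `μ`
on a finite abelian group `X`, where `y` is a character of `X`. -/
noncomputable def charFun {X : Type*} [AddCommGroup X] [Fintype X]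
    (μ : X → ℝ) (y : AddChar X ℂ) : ℂ :=
  ∑ x, (μ x : ℂ) * y x

/-- The Haar (uniform) distribution `m_K` on a subgroup `K` of `X`. -/
noncomputable def haarDist {X : Type*} [AddCommGroup X] [Fintype X]
    (K : AddSubgroup X) : X → ℝ :=
  (K : Set X).indicator fun _ => ((Nat.card K : ℝ))⁻¹

/-- The degenerate distribution `E_{x₀}` concentrated at `x₀`. -/
def diracDist {X : Type*} [DecidableEq X] (x₀ : X) : X → ℝ :=
  fun x => if x = x₀ then 1 else 0

/-- Convolution of two distributions on a finite abelian group. -/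
noncomputable def convDist {X : Type*} [AddCommGroup X] [Fintype X]
    (μ ν : X → ℝ) : X → ℝ :=
  fun x => ∑ t, μ t * ν (x - t)

/-- `μ` is an idempotent distribution: a shift of the Haar distribution on a subgroup. -/
noncomputable def IsIdempotent {X : Type*} [AddCommGroup X] [Fintype X] [DecidableEq X]
    (μ : X → ℝ) : Prop :=
  ∃ (K : AddSubgroup X) (x₀ : X), μ = convDist (haarDist K) (diracDist x₀)

/-- The linear forms `L_j = ∑_i A i j (ξ i)`, `j = 1,…,k`, of independent random
variables `ξ i` with distributions `μ i` are independent: the joint distribution of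
`(L_1, …, L_k)` equals the product of the marginal distributions. -/
def FormsIndep {X : Type*} [AddCommGroup X] [Fintype X] [DecidableEq X] {n k : ℕ}
    (μ : Fin n → X → ℝ) (A : Fin n → Fin k → X → X) : Prop :=
  ∀ x : Fin k → X,
    (∑ t : Fin n → X, if (∀ j, ∑ i, A i j (t i) = x j) then ∏ i, μ i (t i) else 0) =
    ∏ j, ∑ t : Fin n → X, if (∑ i, A i j (t i) = x j) then ∏ i, μ i (t i) else 0

/-- The adjoint `α̃` of an endomorphism `α` of `X`, acting on the character group:
`(α x, y) = (x, α̃ y)`. -/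
noncomputable def adjChar {X : Type*} [AddCommGroup X] (α : X →+ X)
    (y : AddChar X ℂ) : AddChar X ℂ :=
  y.compAddMonoidHom α

/-- if `μ * μ̄ = m_K` (where `μ̄(M) = μ(-M)`) for a subgroup `K`,
then `μ = m_K * E_x` for some `x`. -/
theorem stmt13 {X : Type*} [AddCommGroup X] [Fintype X] [DecidableEq X]
    (μ : X → ℝ) (hμ : IsDist μ) (K : AddSubgroup X)
    (hconv : convDist μ (fun x => μ (-x)) = haarDist K) :
    ∃ x₀ : X, μ = convDist (haarDist K) (diracDist x₀) := by
  classical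
  obtain ⟨hpos, hsum⟩ := hμ
  set c : ℝ := ((Nat.card K : ℝ))⁻¹ with hc
  have hKpos : (0:ℝ) < (Nat.card K : ℝ) := by exact_mod_cast Nat.card_pos
  have h0 : ∑ t, μ t ^ 2 = c := by
    have h := congrFun hconv 0
    simp only [convDist, haarDist] at h
    rw [Set.indicator_of_mem (K.zero_mem)] at h
    rw [hc, Nat.card_eq_fintype_card]
    simpa [sq] using h
  have hdisj : ∀ s t, μ s ≠ 0 → μ t ≠ 0 → s - t ∈ K := by
    intro s t hs ht
    by_contra hst
    have h := congrFun hconv (s - t)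
    simp only [convDist, haarDist] at h
    rw [Set.indicator_of_notMem hst] at h
    have hz : ∀ u ∈ Finset.univ, μ u * μ (-(s - t - u)) = 0 := by
      rw [Finset.sum_eq_zero_iff_of_nonneg] at h
      · exact h
      · intro u _; exact mul_nonneg (hpos u) (hpos _)
    have h2 := hz s (Finset.mem_univ s)
    simp only [sub_sub_cancel_left, neg_neg] at h2
    exact (mul_ne_zero hs ht) h2
  obtain ⟨x₀, hx₀⟩ : ∃ x₀, μ x₀ ≠ 0 := by
    by_contra h
    push_neg at h
    simp [h] at hsum
  set S : Finset X := Finset.univ.filter (fun t => t - x₀ ∈ K) with hS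
  have hsupp : ∀ t, μ t ≠ 0 → t ∈ S := by
    intro t ht
    simp only [hS, Finset.mem_filter, Finset.mem_univ, true_and]
    exact hdisj t x₀ ht hx₀
  have hoff : ∀ x, x ∉ S → μ x = 0 := by
    intro x hx
    by_contra h
    exact hx (hsupp x h)
  have hSsum : ∑ t ∈ S, μ t = 1 := by
    rw [← hsum]
    exact Finset.sum_subset (Finset.subset_univ S) (fun x _ hx => hoff x hx)
  have hSsq : ∑ t ∈ S, μ t ^ 2 = c := by
    rw [← h0]
    exact Finset.sum_subset (Finset.subset_univ S) (fun x _ hx => by rw [hoff x hx]; ring)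
  have himg : S = Finset.image (fun k : K => (k : X) + x₀) Finset.univ := by
    ext t
    simp only [hS, Finset.mem_filter, Finset.mem_univ, true_and, Finset.mem_image]
    constructor
    · intro h; exact ⟨⟨t - x₀, h⟩, by simp⟩
    · rintro ⟨⟨k, hk⟩, -, rfl⟩; simpa
  have hinj : Function.Injective (fun k : K => (k : X) + x₀) := by
    intro a b h
    exact Subtype.ext (by simpa using h)
  have hScard : (S.card : ℝ) = (Nat.card K : ℝ) := by
    have : S.card = Nat.card K := by
      rw [Nat.card_eq_fintype_card, himg, Finset.card_image_of_injective _ hinj,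
        Finset.card_univ]
    exact_mod_cast this
  have hconst : ∀ t ∈ S, μ t = c := by
    have hzero : ∑ t ∈ S, (μ t - c) ^ 2 = 0 := by
      have expand : ∑ t ∈ S, (μ t - c) ^ 2
          = (∑ t ∈ S, μ t ^ 2) - 2 * c * (∑ t ∈ S, μ t) + S.card * c ^ 2 := by
        rw [Finset.sum_congr rfl
          (fun t _ => by ring : ∀ t ∈ S, (μ t - c)^2 = μ t ^ 2 - 2 * c * μ t + c ^ 2)]
        rw [Finset.sum_add_distrib, Finset.sum_sub_distrib, ← Finset.mul_sum,
          Finset.sum_const, nsmul_eq_mul]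
      rw [expand, hSsum, hSsq, hScard]
      have hcc : (Nat.card K : ℝ) * c ^ 2 = c := by
        rw [hc]; field_simp
      rw [hcc]; ring
    intro t ht
    have h1 := (Finset.sum_eq_zero_iff_of_nonneg (fun t _ => sq_nonneg (μ t - c))).mp hzero t ht
    have h2 := pow_eq_zero_iff (n := 2) (by norm_num) |>.mp h1
    linarith
  refine ⟨x₀, funext fun x => ?_⟩
  have hRHS : convDist (haarDist K) (diracDist x₀) x = haarDist K (x - x₀) := by
    simp only [convDist, diracDist]
    have hcong : ∀ t ∈ Finset.univ, haarDist K t * (if x - t = x₀ then (1:ℝ) else 0)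
        = if t = x - x₀ then haarDist K t else 0 := by
      intro t _
      have hiff : x - t = x₀ ↔ t = x - x₀ := by
        constructor
        · intro h; rw [← h, sub_sub_cancel]
        · intro h; rw [h, sub_sub_cancel]
      by_cases h : t = x - x₀
      · simp [h, hiff.mpr h]
      · rw [if_neg (fun hq => h (hiff.mp hq)), if_neg h, mul_zero]
    rw [Finset.sum_congr rfl hcong, Finset.sum_ite_eq' Finset.univ (x - x₀) (haarDist K)]
    simp
  rw [hRHS]
  by_cases hx : x - x₀ ∈ K
  · rw [haarDist, Set.indicator_of_mem hx]
    exact hconst x (by simp [hS, hx])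
  · rw [haarDist, Set.indicator_of_notMem hx]
    by_contra h
    exact hx (by simpa [hS] using hsupp x h)
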